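/- arXiv:2006.13576 — 6 statements merged into one kernel-verified Lean document; each statement's English description precedes it below -/
import Mathlib

section
/- For any Lyndon word v, there is no Lyndon word w that can be written as w = xyz where x is a non-empty suffix of v and z is a non-empty prefix of v (and y is an arbitrary, possibly empty, string), with x a proper prefix of w. Equivalently, a Lyndon word cannot begin inside one occurrence of v and end inside a later occurrence of v. -/
/-- A non-empty string is a Lyndon word if it is lexicographically smaller than
all of its non-empty proper suffixes. -/
def IsLyndon {α : Type*} [LinearOrder α] (w : List α) : Prop :=
  w ≠ [] ∧ ∀ s : List α, s <:+ w → s ≠ [] → s ≠ w → List.Lex (· < ·) w s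

private lemma lex_append_self {α : Type*} [LinearOrder α] :
    ∀ (s t : List α), t ≠ [] → List.Lex (· < ·) s (s ++ t)
  | [], t, ht => by
    match t, ht with
    | a :: l, _ => exact List.Lex.nil
  | a :: s, t, ht => List.Lex.cons (lex_append_self s t ht)

private lemma not_lex_append_self {α : Type*} [LinearOrder α] :
    ∀ (s t : List α), ¬ List.Lex (· < ·) (s ++ t) s
  | [], t => fun h => by cases h
  | a :: s, t => by
    intro h
    rw [List.cons_append] at h
    exact not_lex_append_self s t ((List.lex_cons_iff).1 h)

/-- For any Lyndon word `v`, there is no Lyndon word `w = x ++ y ++ z` with `x` a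
non-empty suffix of `v`, `z` a non-empty prefix of `v`, and `x` a proper prefix of `w`. -/
theorem lyndon_cannot_cross_occurrences {α : Type*} [LinearOrder α]
    (v : List α) (hv : IsLyndon v) :
    ¬ ∃ x y z : List α, x ≠ [] ∧ z ≠ [] ∧ x <:+ v ∧ z <+: v ∧
        x ≠ x ++ y ++ z ∧ IsLyndon (x ++ y ++ z) := by
  rintro ⟨x, y, z, hx, hz, hxs, hzp, hne, hw⟩
  set w := x ++ y ++ z with hwdef
  have htrans : ∀ a b c : List α, List.Lex (· < ·) a b → List.Lex (· < ·) b c →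
      List.Lex (· < ·) a c := fun a b c hab hbc =>
    List.lex_trans (fun h₁ h₂ => lt_trans h₁ h₂) hab hbc
  have hasym : ∀ a b : List α, List.Lex (· < ·) a b → List.Lex (· < ·) b a → False :=
    fun a b hab hba => List.lex_asymm (fun h₁ h₂ => lt_asymm h₁ h₂) hab hba
  -- z is a nonempty proper suffix of w
  have hzsuf : z <:+ w := ⟨x ++ y, rfl⟩
  have hznew : z ≠ w := by
    intro h
    have hlen : w.length = x.length + y.length + z.length := by
      simp [hwdef]; omega
    rw [← h] at hlen
    have hx0 : 0 < x.length := List.length_pos_of_ne_nil hx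
    omega
  have h1 : List.Lex (· < ·) w z := hw.2 z hzsuf hz hznew
  -- z ≤ v since z is a prefix of v
  obtain ⟨t, ht⟩ := hzp
  have h2 : ¬ List.Lex (· < ·) v z := ht ▸ not_lex_append_self z t
  -- x < w since x is a proper prefix of w
  have hyz : y ++ z ≠ [] := by simp [hz]
  have h4 : List.Lex (· < ·) x w := by
    rw [hwdef, List.append_assoc]
    exact lex_append_self x (y ++ z) hyz
  -- v ≤ x
  obtain ⟨p, hp⟩ := hxs
  have h3 : ¬ List.Lex (· < ·) x v := by
    rcases eq_or_ne x v with rfl | hxv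
    · exact fun h => hasym _ _ h h
    · have hvx : List.Lex (· < ·) v x := hv.2 x ⟨p, hp⟩ hx hxv
      exact fun h => hasym _ _ hvx h
  -- chain: x < w < z, and ¬ v < z, ¬ x < v give a contradiction
  have hxz : List.Lex (· < ·) x z := htrans _ _ _ h4 h1
  rcases trichotomous_of (List.Lex (· < ·)) z v with hzv | rfl | hvz
  · rcases trichotomous_of (List.Lex (· < ·)) v x with hvx | rfl | hxv'
    · exact hasym _ _ hxz (htrans _ _ _ hzv hvx)
    · exact hasym _ _ hxz hzv
    · exact h3 hxv'
  · exact h3 hxz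
  · exact h2 hvz
end

section
/- (Three Squares Lemma) Let u², v², w² be three squares that are all prefixes of some common string, such that w is primitive and |u| > |v| > |w|. Then |u| ≥ |v| + |w|. -/
/-- `listPow x k` is the `k`-th power `xᵏ` of the string `x`. -/
def listPow {α : Type*} (x : List α) (k : ℕ) : List α := (List.replicate k x).flatten

/-- A string is primitive if it is not a proper power: there are no `x` and `k ≥ 2`
with `w = xᵏ`. -/
def IsPrimitiveWord {α : Type*} (w : List α) : Prop :=
  ¬ ∃ (x : List α) (k : ℕ), 2 ≤ k ∧ w = listPow x k

/-! ### Auxiliary lemmas -/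

lemma lp_succ {α : Type*} (x : List α) (k : ℕ) : listPow x (k+1) = x ++ listPow x k := by
  simp [listPow, List.replicate_succ]

lemma lp_len {α : Type*} (x : List α) (k : ℕ) : (listPow x k).length = k * x.length := by
  induction k with
  | zero => simp [listPow]
  | succ k ih => rw [lp_succ]; simp [ih]; ring

lemma lp_getD {α : Type*} (x : List α) (c : α) (k : ℕ) :
    ∀ i, i < k * x.length → (listPow x k).getD i c = x.getD (i % x.length) c := by
  induction k with
  | zero => intro i hi; simp at hi
  | succ k ih =>
    intro i hi
    rw [lp_succ]
    rcases lt_or_ge i x.length with h1 | h1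
    · rw [List.getD_append _ _ _ _ h1, Nat.mod_eq_of_lt h1]
    · rw [List.getD_append_right _ _ _ _ h1]
      have e : (k+1) * x.length = k * x.length + x.length := by ring
      rw [ih (i - x.length) (by omega)]
      rw [Nat.mod_eq_sub_mod h1]

lemma eq_listPow {α : Type*} (w x : List α) (c : α) (k : ℕ)
    (hlen : w.length = k * x.length)
    (hget : ∀ i, i < w.length → w.getD i c = x.getD (i % x.length) c) :
    w = listPow x k := by
  apply List.ext_getElem (by rw [lp_len]; omega)
  intro i h1 h2
  have e1 : w.getD i c = w[i] := List.getD_eq_getElem w c h1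
  have e2 : (listPow x k).getD i c = (listPow x k)[i] := List.getD_eq_getElem _ c h2
  rw [← e1, ← e2, hget i h1, lp_getD x c k i (by omega)]

/-- Invariance of a function on residues mod `m` under adding `r` implies invariance
under the gcd of `r` and `m`. -/
lemma key_rot {α : Type*} (a : ℕ → α) (m r : ℕ) (hm : 0 < m)
    (h : ∀ i, a ((i + r) % m) = a (i % m)) :
    ∀ i j, i % Nat.gcd r m = j % Nat.gcd r m → a (i % m) = a (j % m) := by
  have hk : ∀ k i, a ((i + k * r) % m) = a (i % m) := by
    intro k
    induction k with
    | zero => simp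
    | succ k ih =>
      intro i
      have e : i + (k + 1) * r = (i + k * r) + r := by ring
      rw [e, h (i + k * r)]
      exact ih i
  set g := Nat.gcd r m with hgdef
  have claim : ∀ i, a (i % m) = a (i % g % m) := by
    rcases eq_or_lt_of_le (Nat.le_of_dvd hm (Nat.gcd_dvd_right r m)) with hg | hg
    · intro i
      rw [← hgdef] at hg
      rw [hg, Nat.mod_mod_of_dvd i dvd_rfl]
    · rw [← hgdef] at hg
      obtain ⟨k0, -, hk0⟩ := Nat.exists_mul_mod_eq_gcd hg
      intro i
      have h1 := hk (i / g * k0) (i % g)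
      have hs : r * k0 ≡ g [MOD m] := by
        unfold Nat.ModEq
        rw [hk0, Nat.mod_eq_of_lt hg]
      have h2 : (i % g + (i / g * k0) * r) % m = i % m := by
        have e1 : (i / g * k0) * r = (i / g) * (r * k0) := by ring
        rw [e1]
        have h3 : i % g + i / g * (r * k0) ≡ i % g + i / g * g [MOD m] :=
          (Nat.ModEq.refl (i % g)).add (hs.mul_left (i / g))
        have e2 : i % g + i / g * g = i := Nat.mod_add_div' i g
        rw [e2] at h3
        exact h3
      rw [h2] at h1
      exact h1
  intro i j hij
  rw [claim i, claim j, hij]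

/-- Backward period reduction: a function with period `p` on `[0, L)` is determined by
its values on `[0, p)`. -/
lemma mod_red {α : Type*} (a : ℕ → α) (p L : ℕ) (hp : 0 < p)
    (h : ∀ i, i + p < L → a (i + p) = a i) : ∀ i, i < L → a i = a (i % p) := by
  intro i
  induction i using Nat.strong_induction_on with
  | _ i ih =>
    intro hi
    rcases lt_or_ge i p with h1 | h1
    · rw [Nat.mod_eq_of_lt h1]
    · have e : i - p + p = i := by omega
      have h2 := h (i - p) (by omega)
      rw [e] at h2
      rw [h2, Nat.mod_eq_sub_mod h1]
      exact ih (i - p) (by omega) (by omega)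

/-- The combinatorial core: from the three square prefixes (encoded as period facts on an
index function `a`) and the no-gap assumption `M < N + n`, the word of length `n`
(the values of `a` on `[0, n)`) is periodic with some period `g` properly dividing `n`. -/
lemma main_aux {α : Type*} (a : ℕ → α) (n N M : ℕ)
    (hn : 0 < n) (hvw : n < N) (huv : N < M) (hcon : M < N + n)
    (hAw : ∀ i, i < n → a (i + n) = a i)
    (hAv : ∀ i, i < N → a (i + N) = a i)
    (hAu : ∀ i, i < M → a (i + M) = a i) :
    ∃ g, 0 < g ∧ g < n ∧ g ∣ n ∧ ∀ i, i < n → a i = a (i % g) := by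
  set d := M - N with hd
  set e := N - n with he
  have hd1 : 1 ≤ d := by omega
  have hdn : d < n := by omega
  have he1 : 1 ≤ e := by omega
  have h2 : ∀ i, i + d < N → a (i + d) = a i := by
    intro i hi
    have e1 := hAv (i + d) hi
    have e2 := hAu i (by omega)
    have e3 : i + d + N = i + M := by omega
    rw [e3] at e1
    rw [← e1, e2]
  have h3 : ∀ i, i < e → i < n → a (n - d + i) = a i := by
    intro i hie hin
    have k1 := hAu (n - d + i) (by omega)
    have k2 := hAv (n + i) (by omega)
    have k3 := hAw i hin
    have e1 : n - d + i + M = n + i + N := by omega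
    have e2 : n + i = i + n := by omega
    rw [e1] at k1
    rw [← k1, k2, e2, k3]
  rcases le_or_gt d e with hde | hed
  · -- Case I : d ≤ e
    have hstep : ∀ i, i < N → a i = a (i % d) := mod_red a d N hd1 h2
    have hc : ∀ i, a ((i + (n - d)) % d) = a (i % d) := by
      intro i
      have hi : i % d < d := Nat.mod_lt _ hd1
      have h3' := h3 (i % d) (by omega) (by omega)
      have e1 : a (n - d + i % d) = a ((n - d + i % d) % d) := hstep _ (by omega)
      have e2 : (i + (n - d)) % d = (n - d + i % d) % d := by
        conv_lhs => rw [Nat.add_comm i (n-d), Nat.add_mod (n-d) i d]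
        conv_rhs => rw [Nat.add_mod (n-d) (i % d) d, Nat.mod_mod_of_dvd i (dvd_refl d)]
      rw [e2, ← e1]
      exact h3'
    have hkey := key_rot a d (n - d) hd1 hc
    set g := Nat.gcd (n - d) d with hg
    have hgd : g ∣ d := Nat.gcd_dvd_right _ _
    have hgnd : g ∣ (n - d) := Nat.gcd_dvd_left _ _
    have hgn : g ∣ n := by
      have e4 : n = (n - d) + d := by omega
      rw [e4]
      exact Nat.dvd_add hgnd hgd
    have hgpos : 0 < g := Nat.gcd_pos_of_pos_right _ hd1
    have hgled : g ≤ d := Nat.le_of_dvd hd1 hgd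
    refine ⟨g, hgpos, by omega, hgn, ?_⟩
    intro i hi
    have s1 : a i = a (i % d) := hstep i (by omega)
    have s2 : a (i % d) = a (i % g % d) :=
      hkey i (i % g) (by rw [Nat.mod_mod_of_dvd i (dvd_refl g)])
    have s3 : i % g % d = i % g := Nat.mod_eq_of_lt (by have := Nat.mod_lt i hgpos; omega)
    rw [s1, s2, s3]
  · -- Case II : e < d
    have hen : e < n := by omega
    have h1 : ∀ i, i + e < n → a (i + e) = a i := by
      intro i hi
      have e1 := hAw (i + e) hi
      have e2 := hAv i (by omega)
      have e3 : i + e + n = i + N := by omega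
      rw [e3] at e1
      rw [← e1, e2]
    have hstep1 : ∀ i, i < n → a i = a (i % e) := mod_red a e n he1 h1
    have hc : ∀ i, a ((i + (n - d)) % e) = a (i % e) := by
      intro i
      have hi : i % e < e := Nat.mod_lt _ he1
      have h3' := h3 (i % e) hi (by omega)
      have e1 : a (n - d + i % e) = a ((n - d + i % e) % e) := hstep1 _ (by omega)
      have e2 : (i + (n - d)) % e = (n - d + i % e) % e := by
        conv_lhs => rw [Nat.add_comm i (n-d), Nat.add_mod (n-d) i e]
        conv_rhs => rw [Nat.add_mod (n-d) (i % e) e, Nat.mod_mod_of_dvd i (dvd_refl e)]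
      rw [e2, ← e1]
      exact h3'
    have hkey1 := key_rot a e (n - d) he1 hc
    set h := Nat.gcd (n - d) e with hh
    have hhnd : h ∣ (n - d) := Nat.gcd_dvd_left _ _
    have hhe : h ∣ e := Nat.gcd_dvd_right _ _
    have hhpos : 0 < h := Nat.gcd_pos_of_pos_right _ he1
    have hhle : h ≤ e := Nat.le_of_dvd he1 hhe
    have hhlend : h ≤ n - d := Nat.le_of_dvd (by omega) hhnd
    have hstep3 : ∀ i, i < n → a i = a (i % h) := by
      intro i hi
      have s1 := hstep1 i hi
      have s2 : a (i % e) = a (i % h % e) :=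
        hkey1 i (i % h) (by rw [Nat.mod_mod_of_dvd i (dvd_refl h)])
      have s3 : i % h % e = i % h := Nat.mod_eq_of_lt (by have := Nat.mod_lt i hhpos; omega)
      rw [s1, s2, s3]
    have hc2 : ∀ i, a ((i + d) % h) = a (i % h) := by
      intro i
      have hi : i % h < h := Nat.mod_lt _ hhpos
      have b1 : a (i % h + d) = a (i % h) := h2 (i % h) (by omega)
      have b2 : a (i % h + d) = a ((i % h + d) % h) := hstep3 _ (by omega)
      have e2 : (i + d) % h = (i % h + d) % h := by
        conv_lhs => rw [Nat.add_mod i d h]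
        conv_rhs => rw [Nat.add_mod (i % h) d h, Nat.mod_mod_of_dvd i (dvd_refl h)]
      rw [e2, ← b2, b1]
    have hkey2 := key_rot a h d hhpos hc2
    set g := Nat.gcd d h with hg
    have hgd : g ∣ d := Nat.gcd_dvd_left _ _
    have hgh : g ∣ h := Nat.gcd_dvd_right _ _
    have hgpos : 0 < g := Nat.gcd_pos_of_pos_right _ hhpos
    have hgleh : g ≤ h := Nat.le_of_dvd hhpos hgh
    have hgn : g ∣ n := by
      have hnd : g ∣ (n - d) := hgh.trans hhnd
      have e4 : n = (n - d) + d := by omega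
      rw [e4]
      exact Nat.dvd_add hnd hgd
    refine ⟨g, hgpos, by omega, hgn, ?_⟩
    intro i hi
    have s1 := hstep3 i hi
    have s2 : a (i % h) = a (i % g % h) :=
      hkey2 i (i % g) (by rw [Nat.mod_mod_of_dvd i (dvd_refl g)])
    have s3 : i % g % h = i % g := Nat.mod_eq_of_lt (by have := Nat.mod_lt i hgpos; omega)
    rw [s1, s2, s3]

/-- Three Squares Lemma: if `u²`, `v²`, `w²` are prefixes of a common string `t`,
`w` is primitive, and `|u| > |v| > |w|`, then `|u| ≥ |v| + |w|`. -/
theorem three_squares_lemma {α : Type*} (t u v w : List α)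
    (hu : u ++ u <+: t) (hv : v ++ v <+: t) (hw : w ++ w <+: t)
    (hwprim : IsPrimitiveWord w)
    (huv : v.length < u.length) (hvw : w.length < v.length) :
    v.length + w.length ≤ u.length := by
  by_contra hcon
  push_neg at hcon
  rcases Nat.eq_zero_or_pos w.length with h0 | hn
  · exact hwprim ⟨[], 2, le_refl 2, by rw [List.length_eq_zero_iff.mp h0]; rfl⟩
  haveI : Inhabited α := ⟨w.head (by intro hnil; rw [hnil] at hn; simp at hn)⟩
  set a : ℕ → α := fun i => t.getD i default with hadef
  have hsq : ∀ s : List α, s ++ s <+: t → ∀ i, i < s.length → a (i + s.length) = a i := by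
    rintro s ⟨rest, hrest⟩ i hi
    have L1 : ((s++s)++rest).getD (i + s.length) default = (s++s).getD (i+s.length) default :=
      List.getD_append _ _ _ _ (by simp; omega)
    have L2 : (s++s).getD (i+s.length) default = s.getD i default := by
      rw [List.getD_append_right _ _ _ _ (by omega : s.length ≤ i + s.length)]
      congr 1
      omega
    have L3 : ((s++s)++rest).getD i default = (s++s).getD i default :=
      List.getD_append _ _ _ _ (by simp; omega)
    have L4 : (s++s).getD i default = s.getD i default := List.getD_append _ _ _ _ hi
    show t.getD (i + s.length) default = t.getD i default
    rw [← hrest, L1, L2, L3, L4]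
  have hval : ∀ i, i < w.length → w.getD i default = a i := by
    have hwt : w <+: t := (w.prefix_append w).trans hw
    obtain ⟨rest, hrest⟩ := hwt
    intro i hi
    show w.getD i default = t.getD i default
    rw [← hrest, List.getD_append _ _ _ _ hi]
  obtain ⟨g, hgpos, hglt, hgdvd, hfin⟩ :=
    main_aux a w.length v.length u.length hn hvw huv hcon (hsq w hw) (hsq v hv) (hsq u hu)
  obtain ⟨m, hm⟩ := hgdvd
  have hm2 : 2 ≤ m := by
    rcases m with _ | _ | m
    · omega
    · have e1 : g * 1 = g := mul_one g
      omega
    · omega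
  apply hwprim
  have hxlen : (w.take g).length = g := by rw [List.length_take]; omega
  refine ⟨w.take g, m, hm2, ?_⟩
  apply eq_listPow w (w.take g) default m
  · rw [hxlen, hm, Nat.mul_comm]
  · intro i hi
    rw [hxlen]
    have hig : i % g < w.length := by have := Nat.mod_lt i hgpos; omega
    have t4 : (w.take g).getD (i % g) default = w.getD (i % g) default := by
      have hb : i % g < (w.take g).length := by rw [hxlen]; exact Nat.mod_lt i hgpos
      rw [List.getD_eq_getElem _ _ hb, List.getD_eq_getElem _ _ hig]
      exact List.getElem_take
    rw [hval i hi, hfin i hi, t4, hval (i % g) hig]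
end

section
/- Let u² and v² be squares where v² is a proper prefix of u². Then the L-root interval r_{u²} of u² is not a substring of v², and moreover either r_{v²} is a prefix of r_{u²} (i.e., the occurrence of r_{v²} starts at the same position as the occurrence of r_{u²} and r_{v²} is a prefix of r_{u²} as a string), or the occurrence of r_{v²} ends strictly before the occurrence of r_{u²} starts. -/
/-- `p` is a period of `w` (0-indexed): `1 ≤ p ≤ |w|` and `w[i] = w[i+p]` whenever
both are defined. -/
def IsPeriodOf {α : Type*} (w : List α) (p : ℕ) : Prop :=
  1 ≤ p ∧ p ≤ w.length ∧ ∀ i : ℕ, i + p < w.length → w[i]? = w[i + p]?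

/-- `p` is the smallest period of `w`. -/
def IsLeastPeriod {α : Type*} (w : List α) (p : ℕ) : Prop :=
  IsPeriodOf w p ∧ ∀ q : ℕ, IsPeriodOf w q → p ≤ q

section Aux

variable {α : Type*}

lemma listPow_succ (x : List α) (k : ℕ) : listPow x (k+1) = x ++ listPow x k := by
  simp [listPow, List.replicate_succ]

lemma listPow_length (x : List α) (k : ℕ) : (listPow x k).length = k * x.length := by
  induction k with
  | zero => simp [listPow]
  | succ k ih => rw [listPow_succ]; simp [ih]; ring

lemma listPow_getD (x : List α) (d : α) : ∀ (k i : ℕ), i < k * x.length →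
    (listPow x k).getD i d = x.getD (i % x.length) d := by
  intro k
  induction k with
  | zero => intro i hi; simp at hi
  | succ k ih =>
    intro i hi
    have hexp : (k+1) * x.length = k * x.length + x.length := by ring
    rw [listPow_succ]
    by_cases h : i < x.length
    · rw [List.getD_append _ _ _ _ h, Nat.mod_eq_of_lt h]
    · push_neg at h
      rw [List.getD_append_right _ _ _ _ h, ih (i - x.length) (by omega)]
      congr 1
      conv_rhs => rw [← Nat.sub_add_cancel h]
      rw [Nat.add_mod_right]

lemma prefix_length_lt {a b : List α} (h : a <+: b) (hne : a ≠ b) : a.length < b.length :=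
  lt_of_le_of_ne h.length_le (fun hl => hne (h.eq_of_length hl))

lemma suffix_length_lt {a b : List α} (h : a <:+ b) (hne : a ≠ b) : a.length < b.length :=
  lt_of_le_of_ne h.length_le (fun hl => hne (h.eq_of_length hl))

lemma prefix_getD {a b : List α} (h : a <+: b) (d : α) (i : ℕ) (hi : i < a.length) :
    b.getD i d = a.getD i d := by
  obtain ⟨t, rfl⟩ := h
  rw [List.getD_append _ _ _ _ hi]

lemma suffix_getD {a b : List α} (h : a <:+ b) (d : α) (i : ℕ) (hi : i < a.length) :
    b.getD (b.length - a.length + i) d = a.getD i d := by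
  obtain ⟨t, rfl⟩ := h
  rw [List.getD_append_right _ _ _ _ (by simp [List.length_append])]
  congr 1
  simp only [List.length_append]
  omega

lemma period_getD {w : List α} {c : ℕ} (h : IsPeriodOf w c) (d : α) {i : ℕ}
    (hi : i + c < w.length) : w.getD i d = w.getD (i + c) d := by
  have h2 := h.2.2 i hi
  rw [List.getD_eq_getElem _ _ (show i < w.length by omega),
      List.getD_eq_getElem _ _ hi]
  rw [List.getElem?_eq_getElem (show i < w.length by omega),
      List.getElem?_eq_getElem hi] at h2
  exact Option.some.inj h2

lemma square_period (u : List α) (hu : u ≠ []) : IsPeriodOf (u ++ u) u.length := by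
  have hlen : (u ++ u).length = u.length + u.length := List.length_append
  have hpos : 0 < u.length := List.length_pos_iff.mpr hu
  refine ⟨hpos, by omega, ?_⟩
  intro i hi
  have hi' : i < u.length := by omega
  rw [List.getElem?_append_left hi', List.getElem?_append_right (by omega)]
  congr 1
  omega

lemma period_of_prefix {w z : List α} {c : ℕ} (h : IsPeriodOf w c) (hp : z <+: w)
    (hcz : c ≤ z.length) : IsPeriodOf z c := by
  obtain ⟨r, rfl⟩ := hp
  refine ⟨h.1, hcz, ?_⟩
  intro i hi
  have h1 : (z ++ r)[i]? = z[i]? := List.getElem?_append_left (by omega)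
  have h2 : (z ++ r)[i+c]? = z[i+c]? := List.getElem?_append_left hi
  have h3 := h.2.2 i (by simp only [List.length_append]; omega)
  rw [h1, h2] at h3
  exact h3

lemma period_sub {w : List α} {a b : ℕ} (ha : IsPeriodOf w a) (hb : IsPeriodOf w b)
    (hab : a < b) (hlen : a + b ≤ w.length) : IsPeriodOf w (b - a) := by
  have hb2 := hb.2.1
  refine ⟨by omega, by omega, ?_⟩
  intro i hi
  by_cases h : i + b < w.length
  · have h1 := hb.2.2 i h
    have h2 := ha.2.2 (i + (b - a)) (by omega)
    rw [show i + (b - a) + a = i + b by omega] at h2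
    rw [h1, ← h2]
  · have h1 := ha.2.2 (i - a) (by omega)
    rw [show i - a + a = i by omega] at h1
    have h2 := hb.2.2 (i - a) (by omega)
    rw [show i - a + b = i + (b - a) by omega] at h2
    rw [← h1, h2]

lemma period_gcd {w : List α} : ∀ (k a b : ℕ), a + b ≤ k → IsPeriodOf w a → IsPeriodOf w b →
    a + b ≤ w.length → IsPeriodOf w (Nat.gcd a b) := by
  intro k
  induction k with
  | zero => intro a b hk ha hb _; have := ha.1; have := hb.1; omega
  | succ k ih =>
    intro a b hk ha hb hlen
    rcases lt_trichotomy a b with h | h | h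
    · have hsub := period_sub ha hb h hlen
      have ha1 := ha.1
      have hb2 := hb.2.1
      have hres := ih a (b - a) (by omega) ha hsub (by omega)
      rwa [show Nat.gcd a (b - a) = Nat.gcd a b by
        conv_rhs => rw [show b = (b - a) + a by omega]
        rw [Nat.gcd_add_self_right]] at hres
    · rw [h, Nat.gcd_self]; exact hb
    · have hsub := period_sub hb ha h (by omega)
      have hb1 := hb.1
      have ha2 := ha.2.1
      have hres := ih b (a - b) (by omega) hb hsub (by omega)
      rwa [show Nat.gcd b (a - b) = Nat.gcd a b by
        rw [show Nat.gcd a b = Nat.gcd b a from Nat.gcd_comm _ _]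
        conv_rhs => rw [show a = (a - b) + b by omega]
        rw [Nat.gcd_add_self_right]] at hres

variable [LinearOrder α]

lemma lex_fd (d : α) : ∀ {x y : List α}, List.Lex (· < ·) x y → y.length < x.length →
    ∃ j, j < y.length ∧ (∀ i < j, x.getD i d = y.getD i d) ∧ x.getD j d < y.getD j d := by
  intro x y h
  induction h with
  | nil => intro h; simp at h
  | @rel a l₁ b l₂ hab =>
    intro _
    exact ⟨0, by simp, by intro i hi; omega, by simpa using hab⟩
  | @cons a l₁ l₂ h ih =>
    intro hlen
    obtain ⟨j, hj, he, hs⟩ := ih (by simpa using hlen)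
    refine ⟨j + 1, by simpa using hj, ?_, by simpa using hs⟩
    intro i hi
    cases i with
    | zero => simp
    | succ i => simpa using he i (by omega)

lemma lyndon_fd (d : α) {lam : List α} (hL : IsLyndon lam) {c : ℕ} (hc1 : 1 ≤ c)
    (hc2 : c < lam.length) :
    ∃ j, j + c < lam.length ∧ (∀ i < j, lam.getD i d = lam.getD (c + i) d) ∧
      lam.getD j d < lam.getD (c + j) d := by
  have hs : lam.drop c <:+ lam := List.drop_suffix c lam
  have hlen : (lam.drop c).length = lam.length - c := List.length_drop
  have hne : lam.drop c ≠ [] := by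
    intro h; apply_fun List.length at h; simp [hlen] at h; omega
  have hne2 : lam.drop c ≠ lam := by
    intro h; apply_fun List.length at h; simp [hlen] at h; omega
  have hlex := hL.2 _ hs hne hne2
  obtain ⟨j, hj, he, hst⟩ := lex_fd d hlex (by omega)
  have hdg : ∀ i, i < lam.length - c → (lam.drop c).getD i d = lam.getD (c + i) d := by
    intro i hi
    have := suffix_getD hs d i (by omega)
    rw [hlen] at this
    rw [← this]
    congr 1
    omega
  refine ⟨j, by omega, ?_, ?_⟩
  · intro i hi
    have := he i hi
    rwa [hdg i (by omega)] at this
  · have := hst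
    rwa [hdg j (by omega)] at this

lemma fd_clash {f : ℕ → α} {a b j1 j2 : ℕ}
    (e1 : ∀ i < j1, f (a+i) = f (b+i)) (s1 : f (a+j1) < f (b+j1))
    (e2 : ∀ i < j2, f (a+i) = f (b+i)) (s2 : f (b+j2) < f (a+j2)) : False := by
  rcases lt_trichotomy j1 j2 with h | h | h
  · rw [e2 j1 h] at s1; exact lt_irrefl _ s1
  · subst h; exact lt_asymm s1 s2
  · rw [e1 j2 h] at s2; exact lt_irrefl _ s2

lemma window {w x y lam : List α} {k : ℕ} (d : α)
    (hx : x <:+ lam) (hxne : x ≠ lam) (hy : y <+: lam) (hyne : y ≠ lam)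
    (hw : w = x ++ (listPow lam k ++ y)) :
    ∀ i < w.length, w.getD i d = lam.getD ((i + lam.length - x.length) % lam.length) d := by
  have hxl : x.length < lam.length := suffix_length_lt hx hxne
  have hyl : y.length < lam.length := prefix_length_lt hy hyne
  have hwl : w.length = x.length + (k * lam.length + y.length) := by
    subst hw; simp [List.length_append, listPow_length]
  intro i hi
  subst hw
  by_cases h1 : i < x.length
  · rw [List.getD_append _ _ _ _ h1]
    have h2 := suffix_getD hx d i h1
    rw [← h2]
    congr 1
    rw [Nat.mod_eq_of_lt (by omega)]
    omega
  · push_neg at h1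
    rw [List.getD_append_right _ _ _ _ h1]
    by_cases h2 : i - x.length < k * lam.length
    · rw [List.getD_append _ _ _ _ (by rw [listPow_length]; exact h2)]
      rw [listPow_getD lam d k _ h2]
      congr 1
      rw [show i + lam.length - x.length = (i - x.length) + lam.length by omega,
        Nat.add_mod_right]
    · push_neg at h2
      rw [List.getD_append_right _ _ _ _ (by rw [listPow_length]; exact h2), listPow_length]
      rw [← prefix_getD hy d _ (by rw [hwl] at hi; omega)]
      congr 1
      have hE : (k+1) * lam.length = k * lam.length + lam.length := by ring
      rw [show i + lam.length - x.length = (i - x.length - k * lam.length) + (k+1) * lam.length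
        by omega, Nat.add_mul_mod_self_right, Nat.mod_eq_of_lt (by rw [hwl] at hi; omega)]

end Aux

/-- Let `u²` and `v²` be squares where `v²` is a proper prefix of `u²`.  The L-root
intervals are given by the decompositions `u² = xᵤ · λᵤ^kᵤ · yᵤ` and
`v² = xᵥ · λᵥ^kᵥ · yᵥ`, where `λᵤ, λᵥ` are Lyndon words whose lengths are the smallest
periods of `u²` and `v²`, `xᵤ, xᵥ` are proper suffixes and `yᵤ, yᵥ` proper prefixes of
the respective L-roots.  Then `r_{u²} = λᵤ^kᵤ` is not a substring of `v²`, and either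
`r_{v²} = λᵥ^kᵥ` starts at the same position as `r_{u²}` and is a prefix of it, or the
occurrence of `r_{v²}` ends strictly before the occurrence of `r_{u²}` starts. -/
theorem two_squares_lroots {α : Type*} [LinearOrder α]
    (u v : List α) (hune : u ≠ []) (hvne : v ≠ [])
    (hpref : v ++ v <+: u ++ u) (hproper : v ++ v ≠ u ++ u)
    (pu pv : ℕ) (hpu : IsLeastPeriod (u ++ u) pu) (hpv : IsLeastPeriod (v ++ v) pv)
    (lu lv xu yu xv yv : List α) (ku kv : ℕ)
    (hluL : IsLyndon lu) (hlul : lu.length = pu)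
    (hlvL : IsLyndon lv) (hlvl : lv.length = pv)
    (hxu : xu <:+ lu) (hxune : xu ≠ lu) (hyu : yu <+: lu) (hyune : yu ≠ lu)
    (hxv : xv <:+ lv) (hxvne : xv ≠ lv) (hyv : yv <+: lv) (hyvne : yv ≠ lv)
    (hdu : u ++ u = xu ++ listPow lu ku ++ yu)
    (hdv : v ++ v = xv ++ listPow lv kv ++ yv) :
    ¬ (listPow lu ku <:+: v ++ v) ∧
      ((xv.length = xu.length ∧ listPow lv kv <+: listPow lu ku) ∨
        xv.length + (listPow lv kv).length ≤ xu.length) := by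
  subst hlul hlvl
  set d : α := u.head hune with hdd
  have hwl : (u ++ u).length = u.length + u.length := List.length_append
  have hzl : (v ++ v).length = v.length + v.length := List.length_append
  have hnpos : 0 < u.length := List.length_pos_iff.mpr hune
  have hmpos : 0 < v.length := List.length_pos_iff.mpr hvne
  have hppos : 0 < lu.length := List.length_pos_iff.mpr hluL.1
  have hqpos : 0 < lv.length := List.length_pos_iff.mpr hlvL.1
  have hmn : v.length < u.length := by
    have h1 := hpref.length_le
    rcases lt_or_eq_of_le h1 with h2 | h2
    · omega
    · exact absurd (hpref.eq_of_length h2) hproper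
  have hsplt : xu.length < lu.length := suffix_length_lt hxu hxune
  have hyult : yu.length < lu.length := prefix_length_lt hyu hyune
  have htqlt : xv.length < lv.length := suffix_length_lt hxv hxvne
  have hyvlt : yv.length < lv.length := prefix_length_lt hyv hyvne
  have hlen_u : u.length + u.length = xu.length + (ku * lu.length + yu.length) := by
    have h := congrArg List.length hdu
    simp only [List.length_append, listPow_length] at h
    omega
  have hlen_v : v.length + v.length = xv.length + (kv * lv.length + yv.length) := by
    have h := congrArg List.length hdv
    simp only [List.length_append, listPow_length] at h
    omega
  have hpn : lu.length ≤ u.length := hpu.2 u.length (square_period u hune)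
  have hqm : lv.length ≤ v.length := hpv.2 v.length (square_period v hvne)
  have hku : 1 ≤ ku := by
    rcases Nat.eq_zero_or_pos ku with h | h
    · rw [h, Nat.zero_mul] at hlen_u; omega
    · exact h
  have hkv : 1 ≤ kv := by
    rcases Nat.eq_zero_or_pos kv with h | h
    · rw [h, Nat.zero_mul] at hlen_v; omega
    · exact h
  have hkup : lu.length ≤ ku * lu.length := by
    calc lu.length = 1 * lu.length := (Nat.one_mul _).symm
    _ ≤ ku * lu.length := Nat.mul_le_mul_right _ hku
  have hkvq : lv.length ≤ kv * lv.length := by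
    calc lv.length = 1 * lv.length := (Nat.one_mul _).symm
    _ ≤ kv * lv.length := Nat.mul_le_mul_right _ hkv
  have hpdvd : lu.length ∣ u.length := by
    have hgcd := period_gcd (lu.length + u.length) lu.length u.length le_rfl hpu.1
      (square_period u hune) (by omega)
    have h1 := hpu.2 _ hgcd
    have h2 : Nat.gcd lu.length u.length ≤ lu.length :=
      Nat.le_of_dvd hppos (Nat.gcd_dvd_left _ _)
    have h3 : Nat.gcd lu.length u.length = lu.length := by omega
    rw [← h3]
    exact Nat.gcd_dvd_right _ _
  have hqdvd : lv.length ∣ v.length := by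
    have hgcd := period_gcd (lv.length + v.length) lv.length v.length le_rfl hpv.1
      (square_period v hvne) (by omega)
    have h1 := hpv.2 _ hgcd
    have h2 : Nat.gcd lv.length v.length ≤ lv.length :=
      Nat.le_of_dvd hqpos (Nat.gcd_dvd_left _ _)
    have h3 : Nat.gcd lv.length v.length = lv.length := by omega
    rw [← h3]
    exact Nat.gcd_dvd_right _ _
  have hW : ∀ i < (u ++ u).length,
      (u ++ u).getD i d = lu.getD ((i + lu.length - xu.length) % lu.length) d :=
    window d hxu hxune hyu hyune (by rw [hdu, List.append_assoc])
  have hZ0 : ∀ i < (v ++ v).length,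
      (v ++ v).getD i d = lv.getD ((i + lv.length - xv.length) % lv.length) d :=
    window d hxv hxvne hyv hyvne (by rw [hdv, List.append_assoc])
  obtain ⟨rest, hrest⟩ := hpref
  have hfz : ∀ i < (v ++ v).length, (u ++ u).getD i d = (v ++ v).getD i d := by
    intro i hi
    rw [← hrest, List.getD_append _ _ _ _ hi]
  have hZ : ∀ i < (v ++ v).length,
      (u ++ u).getD i d = lv.getD ((i + lv.length - xv.length) % lv.length) d :=
    fun i hi => (hfz i hi).trans (hZ0 i hi)
  have hwS : ∀ i < lu.length, (u ++ u).getD (xu.length + i) d = lu.getD i d := by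
    intro i hi
    rw [hW _ (by omega)]
    congr 1
    rw [show xu.length + i + lu.length - xu.length = i + lu.length by omega,
      Nat.add_mod_right, Nat.mod_eq_of_lt hi]
  constructor
  · -- PART A
    intro hinf
    obtain ⟨pre, suf, hps⟩ := hinf
    have hps' : pre ++ (listPow lu ku ++ suf) = v ++ v := by
      rw [← hps, List.append_assoc]
    have hlen2 : pre.length + (ku * lu.length + suf.length) = v.length + v.length := by
      have h := congrArg List.length hps'
      simp only [List.length_append, listPow_length] at h
      omega
    have hocc : ∀ j < ku * lu.length,
        (v ++ v).getD (pre.length + j) d = lu.getD (j % lu.length) d := by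
      intro j hj
      rw [← hps', List.getD_append_right _ _ _ _ (Nat.le_add_right _ _),
        Nat.add_sub_cancel_left, List.getD_append _ _ _ _ (by rw [listPow_length]; exact hj),
        listPow_getD lu d ku j hj]
    have hwin : ∀ j < lu.length, (v ++ v).getD (pre.length + j) d = lu.getD j d := by
      intro j hj
      rw [hocc j (by omega), Nat.mod_eq_of_lt hj]
    have hperm : IsPeriodOf (v ++ v) v.length := square_period v hvne
    have hpm : lu.length ≤ v.length := by
      by_contra hc
      push_neg at hc
      obtain ⟨j, hj, _, hst⟩ := lyndon_fd d hluL hmpos hc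
      have he : lu.getD j d = lu.getD (v.length + j) d := by
        rw [← hwin j (by omega), ← hwin (v.length + j) (by omega),
          show pre.length + (v.length + j) = (pre.length + j) + v.length by omega]
        exact period_getD hperm d (by omega)
      rw [he] at hst
      exact lt_irrefl _ hst
    have hperpz : IsPeriodOf (v ++ v) lu.length :=
      period_of_prefix hpu.1 ⟨rest, hrest⟩ (by omega)
    have hgcd : IsPeriodOf (v ++ v) (Nat.gcd lu.length v.length) :=
      period_gcd (lu.length + v.length) _ _ le_rfl hperpz hperm (by omega)
    have hgpos : 0 < Nat.gcd lu.length v.length := Nat.gcd_pos_of_pos_left _ hppos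
    have hgle : Nat.gcd lu.length v.length ≤ lu.length :=
      Nat.le_of_dvd hppos (Nat.gcd_dvd_left _ _)
    have hgp : Nat.gcd lu.length v.length = lu.length := by
      by_contra hne'
      have hlt : Nat.gcd lu.length v.length < lu.length := by omega
      obtain ⟨j, hj, _, hst⟩ := lyndon_fd d hluL hgpos hlt
      have he : lu.getD j d = lu.getD (Nat.gcd lu.length v.length + j) d := by
        rw [← hwin j (by omega), ← hwin (Nat.gcd lu.length v.length + j) (by omega),
          show pre.length + (Nat.gcd lu.length v.length + j)
            = (pre.length + j) + Nat.gcd lu.length v.length by omega]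
        exact period_getD hgcd d (by omega)
      rw [he] at hst
      exact lt_irrefl _ hst
    have hpm' : lu.length ∣ v.length := hgp ▸ Nat.gcd_dvd_right _ _
    have hmpn : v.length + lu.length ≤ u.length := by
      obtain ⟨a, ha⟩ := hpdvd
      obtain ⟨b, hb⟩ := hpm'
      have hba : b < a := by
        apply Nat.lt_of_mul_lt_mul_left (a := lu.length)
        omega
      have h4 : lu.length * (b + 1) ≤ lu.length * a := Nat.mul_le_mul_left _ (by omega)
      have h5 : lu.length * (b + 1) = lu.length * b + lu.length := Nat.mul_succ _ _
      omega
    omega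
  · -- PART B
    by_cases hcase : xv.length + (listPow lv kv).length ≤ xu.length
    · exact Or.inr hcase
    · left
      rw [listPow_length] at hcase
      push_neg at hcase
      -- hcase : xu.length < xv.length + kv * lv.length
      have hevle : xv.length + kv * lv.length ≤ (v ++ v).length := by omega
      have hqp : lv.length ≤ lu.length := by
        by_cases h2m : lu.length ≤ (v ++ v).length
        · exact hpv.2 _ (period_of_prefix hpu.1 ⟨rest, hrest⟩ h2m)
        · omega
      -- B1 : xv.length = xu.length
      have hts : xv.length = xu.length := by
        rcases lt_trichotomy xv.length xu.length with hlt | heq | hgt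
        · -- t < s
          exfalso
          obtain ⟨e, c, hce, hclt⟩ : ∃ e c, xu.length - xv.length = lv.length * e + c
              ∧ c < lv.length :=
            ⟨(xu.length - xv.length) / lv.length, (xu.length - xv.length) % lv.length,
              (Nat.div_add_mod _ _).symm, Nat.mod_lt _ hqpos⟩
          have hElt : e < kv := by
            apply Nat.lt_of_mul_lt_mul_left (a := lv.length)
            have h9 : kv * lv.length = lv.length * kv := Nat.mul_comm _ _
            omega
          have hmulE : lv.length * (e + 1) = lv.length * e + lv.length := Nat.mul_succ _ _
          have hmulK : lv.length * (e + 1) ≤ lv.length * kv := Nat.mul_le_mul_left _ (by omega)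
          have h9 : kv * lv.length = lv.length * kv := Nat.mul_comm _ _
          -- a := xv.length + lv.length * e ; a + c = xu.length ; a + lv.length ≤ ev
          have hac : (xv.length + lv.length * e) + c = xu.length := by omega
          have haev : (xv.length + lv.length * e) + lv.length ≤ xv.length + kv * lv.length := by
            omega
          by_cases hc0 : 0 < c
          · -- branch c > 0
            obtain ⟨j1, hj1, he1, hs1⟩ := lyndon_fd d hluL (c := lu.length - c)
              (by omega) (by omega)
            have hwA : ∀ i < c, (u ++ u).getD ((xv.length + lv.length * e) + i) d
                = lu.getD ((lu.length - c) + i) d := by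
              intro i hi
              rw [hW _ (by omega)]
              congr 1
              rw [show (xv.length + lv.length * e) + i + lu.length - xu.length
                  = (lu.length - c) + i by omega, Nat.mod_eq_of_lt (by omega)]
            obtain ⟨j2, hj2, he2, hs2⟩ := lyndon_fd d hlvL (c := c) hc0 (by omega)
            have hzA : ∀ i < lv.length, (u ++ u).getD ((xv.length + lv.length * e) + i) d
                = lv.getD i d := by
              intro i hi
              rw [hZ _ (by omega)]
              congr 1
              rw [show (xv.length + lv.length * e) + i + lv.length - xv.length
                  = i + lv.length * (e + 1) by omega, Nat.add_mul_mod_self_left,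
                Nat.mod_eq_of_lt hi]
            have hzS : ∀ i, c + i < lv.length → (u ++ u).getD (xu.length + i) d
                = lv.getD (c + i) d := by
              intro i hi
              rw [hZ _ (by omega)]
              congr 1
              rw [show xu.length + i + lv.length - xv.length
                  = (c + i) + lv.length * (e + 1) by omega, Nat.add_mul_mod_self_left,
                Nat.mod_eq_of_lt hi]
            refine fd_clash (f := fun i => (u ++ u).getD i d) (a := xu.length)
              (b := xv.length + lv.length * e) (j1 := j1) (j2 := j2) ?_ ?_ ?_ ?_
            · intro i hi
              rw [hwS i (by omega), hwA i (by omega), he1 i hi]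
            · rw [hwS j1 (by omega), hwA j1 (by omega)]
              exact hs1
            · intro i hi
              rw [hzS i (by omega), hzA i (by omega)]
              exact (he2 i hi).symm
            · rw [hzA j2 (by omega), hzS j2 (by omega)]
              exact hs2
          · -- branch c = 0
            have hc0' : c = 0 := by omega
            have he1' : 1 ≤ e := by
              rcases Nat.eq_zero_or_pos e with h0 | h0
              · rw [h0, Nat.mul_zero] at hce; omega
              · exact h0
            obtain ⟨e', rfl⟩ : ∃ e', e = e' + 1 := ⟨e - 1, by omega⟩
            have hmulE' : lv.length * (e' + 1) = lv.length * e' + lv.length := Nat.mul_succ _ _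
            have hqltp : lv.length < lu.length := by
              by_contra hh
              push_neg at hh
              have : lv.length = lu.length := le_antisymm hqp hh
              omega
            -- b := xv.length + lv.length * e' ; b + lv.length = xu.length
            have hbq : (xv.length + lv.length * e') + lv.length = xu.length := by omega
            have hsqev : xu.length + lv.length ≤ xv.length + kv * lv.length := by omega
            have hwB : ∀ i < lv.length, (u ++ u).getD ((xv.length + lv.length * e') + i) d
                = lu.getD ((lu.length - lv.length) + i) d := by
              intro i hi
              rw [hW _ (by omega)]
              congr 1
              rw [show (xv.length + lv.length * e') + i + lu.length - xu.length
                  = (lu.length - lv.length) + i by omega, Nat.mod_eq_of_lt (by omega)]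
            have hzB : ∀ i < lv.length, (u ++ u).getD ((xv.length + lv.length * e') + i) d
                = lv.getD i d := by
              intro i hi
              rw [hZ _ (by omega)]
              congr 1
              rw [show (xv.length + lv.length * e') + i + lv.length - xv.length
                  = i + lv.length * (e' + 1) by omega, Nat.add_mul_mod_self_left,
                Nat.mod_eq_of_lt hi]
            have hzS : ∀ i < lv.length, (u ++ u).getD (xu.length + i) d = lv.getD i d := by
              intro i hi
              rw [hZ _ (by omega)]
              congr 1
              rw [show xu.length + i + lv.length - xv.length
                  = i + lv.length * (e' + 1 + 1) by
                    have := Nat.mul_succ lv.length (e' + 1); omega,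
                Nat.add_mul_mod_self_left, Nat.mod_eq_of_lt hi]
            obtain ⟨j1, hj1, he1, hs1⟩ := lyndon_fd d hluL (c := lu.length - lv.length)
              (by omega) (by omega)
            obtain ⟨j2, hj2, he2, hs2⟩ := lyndon_fd d hluL (c := lv.length) hqpos hqltp
            refine fd_clash (f := fun i => (u ++ u).getD i d) (a := xu.length)
              (b := xv.length + lv.length * e') (j1 := j1) (j2 := lv.length + j2) ?_ ?_ ?_ ?_
            · intro i hi
              rw [hwS i (by omega), hwB i (by omega), he1 i hi]
            · rw [hwS j1 (by omega), hwB j1 (by omega)]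
              exact hs1
            · intro i hi
              by_cases hiq : i < lv.length
              · rw [hzS i hiq, hzB i hiq]
              · push_neg at hiq
                calc (u ++ u).getD (xu.length + i) d
                    = lu.getD i d := hwS i (by omega)
                  _ = lu.getD (lv.length + (i - lv.length)) d := by congr 1; omega
                  _ = lu.getD (i - lv.length) d := (he2 (i - lv.length) (by omega)).symm
                  _ = (u ++ u).getD (xu.length + (i - lv.length)) d :=
                      (hwS _ (by omega)).symm
                  _ = (u ++ u).getD ((xv.length + lv.length * e') + i) d := by congr 1; omega
            · calc (u ++ u).getD ((xv.length + lv.length * e') + (lv.length + j2)) d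
                  = (u ++ u).getD (xu.length + j2) d := by congr 1; omega
                _ = lu.getD j2 d := hwS j2 (by omega)
                _ < lu.getD (lv.length + j2) d := hs2
                _ = (u ++ u).getD (xu.length + (lv.length + j2)) d :=
                    (hwS _ (by omega)).symm
        · exact heq
        · -- t > s
          exfalso
          have hclt2 : xv.length - xu.length < lv.length := by omega
          have hcpos : 0 < xv.length - xu.length := by omega
          obtain ⟨j1, hj1, he1, hs1⟩ := lyndon_fd d hlvL
            (c := lv.length - (xv.length - xu.length)) (by omega) (by omega)
          have hzT : ∀ i < lv.length, (u ++ u).getD (xv.length + i) d = lv.getD i d := by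
            intro i hi
            rw [hZ _ (by omega)]
            congr 1
            rw [show xv.length + i + lv.length - xv.length = i + lv.length by omega,
              Nat.add_mod_right, Nat.mod_eq_of_lt hi]
          have hzS' : ∀ i < xv.length - xu.length, (u ++ u).getD (xu.length + i) d
              = lv.getD ((lv.length - (xv.length - xu.length)) + i) d := by
            intro i hi
            rw [hZ _ (by omega)]
            congr 1
            rw [show xu.length + i + lv.length - xv.length
                = (lv.length - (xv.length - xu.length)) + i by omega,
              Nat.mod_eq_of_lt (by omega)]
          obtain ⟨j2, hj2, he2, hs2⟩ := lyndon_fd d hluL (c := xv.length - xu.length)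
            (by omega) (by omega)
          have hwT : ∀ i, (xv.length - xu.length) + i < lu.length →
              (u ++ u).getD (xv.length + i) d
                = lu.getD ((xv.length - xu.length) + i) d := by
            intro i hi
            rw [hW _ (by omega)]
            congr 1
            rw [show xv.length + i + lu.length - xu.length
                = ((xv.length - xu.length) + i) + lu.length by omega,
              Nat.add_mod_right, Nat.mod_eq_of_lt hi]
          refine fd_clash (f := fun i => (u ++ u).getD i d) (a := xv.length)
            (b := xu.length) (j1 := j1) (j2 := j2) ?_ ?_ ?_ ?_
          · intro i hi
            rw [hzT i (by omega), hzS' i (by omega), he1 i hi]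
          · rw [hzT j1 (by omega), hzS' j1 (by omega)]
            exact hs1
          · intro i hi
            rw [hwT i (by omega), hwS i (by omega)]
            exact (he2 i hi).symm
          · rw [hwS j2 (by omega), hwT j2 (by omega)]
            exact hs2
      -- B2 : kv * lv.length ≤ ku * lu.length
      have hvu : kv * lv.length ≤ ku * lu.length := by
        rcases lt_or_eq_of_le hqp with hql | hqe
        · -- q < p : show 2m < s + p
          have h2m : (v ++ v).length < xu.length + lu.length := by
            by_contra hh
            push_neg at hh
            obtain ⟨j, hj, _, hst⟩ := lyndon_fd d hluL hqpos hql
            have hgoal : lu.getD j d = lu.getD (lv.length + j) d := by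
              rw [← hwS j (by omega), ← hwS (lv.length + j) (by omega),
                hfz _ (by omega), hfz _ (by omega),
                show xu.length + (lv.length + j) = (xu.length + j) + lv.length by omega]
              exact period_getD hpv.1 d (by omega)
            rw [hgoal] at hst
            exact lt_irrefl _ hst
          omega
        · -- q = p
          have hdv2 : lv.length ∣ xv.length + yv.length := by
            have hq2m : lv.length ∣ v.length + v.length := Dvd.dvd.add hqdvd hqdvd
            have hqkv : lv.length ∣ kv * lv.length := Dvd.intro_left kv rfl
            have h2 : (xv.length + yv.length) + kv * lv.length = v.length + v.length := by
              omega
            exact (Nat.dvd_add_right hqkv).mp (by rw [Nat.add_comm] at h2; rw [h2]; exact hq2m)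
          have hdu2 : lu.length ∣ xu.length + yu.length := by
            have hp2n : lu.length ∣ u.length + u.length := Dvd.dvd.add hpdvd hpdvd
            have hpku : lu.length ∣ ku * lu.length := Dvd.intro_left ku rfl
            have h2 : (xu.length + yu.length) + ku * lu.length = u.length + u.length := by
              omega
            exact (Nat.dvd_add_right hpku).mp (by rw [Nat.add_comm] at h2; rw [h2]; exact hp2n)
          obtain ⟨c1, hc1⟩ := hdv2
          obtain ⟨c2, hc2⟩ := hdu2
          have hc1le : c1 ≤ 1 := by
            by_contra hh
            push_neg at hh
            have : lv.length * 2 ≤ lv.length * c1 := Nat.mul_le_mul_left _ hh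
            omega
          have hc2le : c2 ≤ 1 := by
            by_contra hh
            push_neg at hh
            have : lu.length * 2 ≤ lu.length * c2 := Nat.mul_le_mul_left _ hh
            omega
          interval_cases c1 <;> interval_cases c2 <;> omega
      -- B3 : prefix
      have hdru : (u ++ u).drop xu.length = listPow lu ku ++ yu := by
        rw [hdu, List.append_assoc, List.drop_left]
      have hdrv : (v ++ v).drop xv.length = listPow lv kv ++ yv := by
        rw [hdv, List.append_assoc, List.drop_left]
      have hsplit : (v ++ v).take xv.length ++ ((v ++ v).drop xv.length ++ rest)
          = u ++ u := by
        rw [← List.append_assoc, List.take_append_drop, hrest]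
      have hdropw : (u ++ u).drop xv.length = (v ++ v).drop xv.length ++ rest := by
        rw [← hsplit, List.drop_left' (by rw [List.length_take]; omega)]
      have hchain : listPow lu ku ++ yu = (listPow lv kv ++ yv) ++ rest := by
        rw [← hdru, ← hdrv, ← hdropw, hts]
      have h4 : listPow lv kv <+: listPow lu ku ++ yu := by
        rw [hchain, List.append_assoc]
        exact List.prefix_append _ _
      exact ⟨hts, List.prefix_of_prefix_length_le h4 (List.prefix_append _ _)
        (by rw [listPow_length, listPow_length]; exact hvu)⟩
end

section
/- Let S : ℕ → ℝ be any function satisfying S(1) = 0 and, for every n ≥ 2, S(n) ≤ max{ S(n₁) + S(n₂) + min(n₁, n₂) : n₁, n₂ ≥ 1 and n₁ + n₂ = n }. Then S(n) ≤ (n/2)·log₂ n for all n ≥ 1. -/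
open Real Set

private lemma key_ineq (a b : ℝ) (ha : 0 < a) (hab : a ≤ b) :
    a * Real.log a + b * Real.log b + 2 * a * Real.log 2 ≤ (a + b) * Real.log (a + b) := by
  set f : ℝ → ℝ := fun x => (a + x) * Real.log (a + x) - x * Real.log x with hf
  have hd : ∀ x ∈ Set.Ici a, HasDerivAt f (Real.log (a + x) - Real.log x) x := by
    intro x hx
    have hx0 : 0 < x := lt_of_lt_of_le ha hx
    have hax : 0 < a + x := by linarith
    have h1 : HasDerivAt (fun x : ℝ => a + x) 1 x := by
      simpa using (hasDerivAt_id x).const_add a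
    have h2 : HasDerivAt (fun y : ℝ => y * Real.log y) (Real.log (a + x) + 1) (a + x) :=
      Real.hasDerivAt_mul_log (ne_of_gt hax)
    have h3 : HasDerivAt (fun x : ℝ => (a + x) * Real.log (a + x))
        ((Real.log (a + x) + 1) * 1) x := h2.comp x h1
    have h4 : HasDerivAt (fun x : ℝ => x * Real.log x) (Real.log x + 1) x :=
      Real.hasDerivAt_mul_log (ne_of_gt hx0)
    have := h3.sub h4
    exact this.congr_deriv (by ring)
  have hmono : MonotoneOn f (Set.Ici a) := by
    apply monotoneOn_of_deriv_nonneg (convex_Ici a)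
    · exact fun x hx => ((hd x hx).continuousAt).continuousWithinAt
    · intro x hx
      rw [interior_Ici] at hx
      exact ((hd x (Set.mem_Ici.mpr (le_of_lt (Set.mem_Ioi.mp hx)))).differentiableAt).differentiableWithinAt
    · intro x hx
      rw [interior_Ici] at hx
      rw [(hd x (Set.mem_Ici.mpr (le_of_lt (Set.mem_Ioi.mp hx)))).deriv]
      have hx0 : 0 < x := lt_trans ha hx
      have : Real.log x ≤ Real.log (a + x) :=
        Real.log_le_log hx0 (by linarith)
      linarith
  have hfab : f a ≤ f b := hmono (le_refl a) hab hab
  have hfa : f a = 2 * a * Real.log 2 + a * Real.log a := by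
    have : a + a = 2 * a := by ring
    rw [hf]
    simp only [this]
    rw [Real.log_mul (by norm_num) (ne_of_gt ha)]
    ring
  rw [hfa, hf] at hfab
  simp only at hfab
  linarith

/-- If `S : ℕ → ℝ` satisfies `S 1 = 0` and, for every `n ≥ 2`,
`S n ≤ max { S n₁ + S n₂ + min n₁ n₂ : n₁, n₂ ≥ 1, n₁ + n₂ = n }`
(the maximum being attained by some pair), then `S n ≤ (n/2) · log₂ n` for all `n ≥ 1`. -/
theorem S_le_half_n_log_n (S : ℕ → ℝ) (h1 : S 1 = 0)
    (hrec : ∀ n : ℕ, 2 ≤ n → ∃ n₁ n₂ : ℕ, 1 ≤ n₁ ∧ 1 ≤ n₂ ∧ n₁ + n₂ = n ∧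
      S n ≤ S n₁ + S n₂ + (min n₁ n₂ : ℝ)) :
    ∀ n : ℕ, 1 ≤ n → S n ≤ ((n : ℝ) / 2) * Real.logb 2 n := by
  intro n
  induction n using Nat.strong_induction_on with
  | _ n ih =>
    intro hn
    rcases eq_or_lt_of_le hn with h | h
    · simp [← h, h1]
    · have hn2 : 2 ≤ n := h
      obtain ⟨n₁, n₂, hn₁, hn₂, hsum, hS⟩ := hrec n hn2
      have hlt1 : n₁ < n := by omega
      have hlt2 : n₂ < n := by omega
      have ih1 := ih n₁ hlt1 hn₁
      have ih2 := ih n₂ hlt2 hn₂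
      -- set a = min, b = max as reals
      set a : ℝ := ((min n₁ n₂ : ℕ) : ℝ) with ha_def
      set b : ℝ := ((max n₁ n₂ : ℕ) : ℝ) with hb_def
      have hapos : (0:ℝ) < a := by
        have : 1 ≤ min n₁ n₂ := le_min hn₁ hn₂
        rw [ha_def]; exact_mod_cast lt_of_lt_of_le zero_lt_one (by exact_mod_cast this)
      have hab : a ≤ b := by
        rw [ha_def, hb_def]; exact_mod_cast min_le_max
      have habn : a + b = (n : ℝ) := by
        rw [ha_def, hb_def, ← Nat.cast_add]
        norm_cast
        omega
      have key := key_ineq a b hapos hab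
      rw [habn] at key
      -- relate a log a + b log b to n₁, n₂ terms
      have hsum_logs : a * Real.log a + b * Real.log b
          = (n₁ : ℝ) * Real.log n₁ + (n₂ : ℝ) * Real.log n₂ := by
        rcases le_total n₁ n₂ with hle | hle
        · rw [ha_def, hb_def, min_eq_left hle, max_eq_right hle]
        · rw [ha_def, hb_def, min_eq_right hle, max_eq_left hle]; ring
      rw [hsum_logs] at key
      have hlog2 : (0:ℝ) < Real.log 2 := Real.log_pos (by norm_num)
      have goal2 : ((n₁:ℝ)/2) * Real.logb 2 n₁ + ((n₂:ℝ)/2) * Real.logb 2 n₂ + a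
          ≤ ((n:ℝ)/2) * Real.logb 2 n := by
        simp only [Real.logb]
        rw [← sub_nonneg]
        have expand : (n:ℝ)/2 * (Real.log n / Real.log 2)
            - ((n₁:ℝ)/2 * (Real.log n₁ / Real.log 2)
              + (n₂:ℝ)/2 * (Real.log n₂ / Real.log 2) + a)
            = ((n:ℝ) * Real.log n
              - ((n₁:ℝ) * Real.log n₁ + (n₂:ℝ) * Real.log n₂ + 2 * a * Real.log 2))
              * (2 * Real.log 2)⁻¹ := by
          field_simp
        rw [expand]
        apply mul_nonneg (by linarith) (by positivity)
      have hmin : (min n₁ n₂ : ℝ) = a := by rw [ha_def]; norm_cast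
      calc S n ≤ S n₁ + S n₂ + (min n₁ n₂ : ℝ) := hS
        _ ≤ ((n₁:ℝ)/2) * Real.logb 2 n₁ + ((n₂:ℝ)/2) * Real.logb 2 n₂ + a := by
            rw [hmin]; linarith
        _ ≤ ((n:ℝ)/2) * Real.logb 2 n := goal2
end

section
/- Let v be a string whose smallest period p satisfies 2p ≤ |v| (a repetition). Then there exists exactly one string λ of length p that is a Lyndon word and occurs as a substring of v (the L-root of v). -/
namespace LRootAux

variable {α : Type*} [LinearOrder α]

theorem lexA : ∀ (b a c : List α), List.Lex (· < ·) a (b ++ c) →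
    List.Lex (· < ·) a b ∨ b <+: a := by
  intro b
  induction b with
  | nil => intro a c _; exact Or.inr List.nil_prefix
  | cons y b ih =>
    intro a c h
    cases a with
    | nil => exact Or.inl List.Lex.nil
    | cons x a =>
      rw [List.cons_append] at h
      cases h with
      | rel h => exact Or.inl (List.Lex.rel h)
      | cons h =>
        rcases ih a c h with h' | h'
        · exact Or.inl (List.Lex.cons h')
        · obtain ⟨z, hz⟩ := h'
          exact Or.inr ⟨z, by rw [List.cons_append, hz]⟩

theorem lexB : ∀ (a b c : List α), List.Lex (· < ·) a b → a.length = b.length →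
    List.Lex (· < ·) (a ++ c) (b ++ c) := by
  intro a
  induction a with
  | nil =>
    intro b c h hl
    cases b with
    | nil => exact absurd h (List.not_lex_nil)
    | cons y b => simp at hl
  | cons x a ih =>
    intro b c h hl
    cases b with
    | nil => simp at hl
    | cons y b =>
      cases h with
      | rel h => exact List.Lex.rel h
      | cons h => exact List.Lex.cons (ih b c h (by simpa using hl))

theorem lexC : ∀ (s a b : List α), List.Lex (· < ·) (s ++ a) (s ++ b) →
    List.Lex (· < ·) a b := by
  intro s
  induction s with
  | nil => intro a b h; simpa using h
  | cons x s ih =>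
    intro a b h
    rw [List.cons_append, List.cons_append] at h
    cases h with
    | rel h => exact absurd h (lt_irrefl x)
    | cons h => exact ih a b h

end LRootAux

/-- Every repetition (a string whose smallest period `p` satisfies `2p ≤ |v|`) has a
unique L-root: exactly one string of length `p` that is a Lyndon word and is a
substring of `v`. -/
theorem lroot_exists_unique {α : Type*} [LinearOrder α]
    (v : List α) (p : ℕ) (hp : IsLeastPeriod v p) (hrep : 2 * p ≤ v.length) :
    ∃! lam : List α, lam.length = p ∧ IsLyndon lam ∧ lam <:+: v := by
  obtain ⟨⟨hp1, hpv, hper⟩, hleast⟩ := hp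
  have hp0 : 0 < p := hp1
  set u := v.take p with hu
  have hul : u.length = p := by rw [hu, List.length_take]; omega
  -- indices of v can be reduced mod p
  have hvmod : ∀ k, k < v.length → v[k]? = v[k % p]? := by
    intro k
    induction k using Nat.strong_induction_on with
    | _ k ih =>
      intro hk
      rcases lt_or_ge k p with h | h
      · rw [Nat.mod_eq_of_lt h]
      · have h1 := hper (k - p) (by omega)
        have h2 : k - p + p = k := by omega
        rw [h2] at h1
        rw [← h1, ih (k - p) (by omega) (by omega), Nat.mod_eq_sub_mod h]
  have hug : ∀ j, j < p → u[j]? = v[j]? := by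
    intro j hj
    rw [hu, List.getElem?_take_of_lt hj]
  -- every window of length p of v is a rotation of u
  have hW : ∀ i, i + p ≤ v.length → (v.drop i).take p = u.rotate (i % p) := by
    intro i hi
    apply List.ext_getElem?
    intro j
    rcases lt_or_ge j p with hj | hj
    · have e1 : ((v.drop i).take p)[j]? = v[(i + j) % p]? := by
        rw [List.getElem?_take_of_lt hj, List.getElem?_drop, hvmod (i + j) (by omega)]
      have e2 : (u.rotate (i % p))[j]? = v[(i + j) % p]? := by
        rw [List.getElem?_rotate (show j < u.length by rw [hul]; exact hj), hul,
          Nat.add_mod_mod, Nat.add_comm j i, hug _ (Nat.mod_lt _ hp0)]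
      rw [e1, e2]
    · rw [List.getElem?_eq_none (by rw [List.length_take]; omega),
        List.getElem?_eq_none (by rw [List.length_rotate, hul]; omega)]
  -- windows are substrings
  have hWinf : ∀ i, (v.drop i).take p <:+: v := by
    intro i
    obtain ⟨a, ha⟩ := List.take_prefix p (v.drop i)
    exact ⟨v.take i, a, by rw [List.append_assoc, ha, List.take_append_drop]⟩
  -- primitivity of u
  have hprim : ∀ d, 0 < d → d < p → u.rotate d ≠ u := by
    intro d hd0 hdp heq
    have hud : ∀ j, j < p → u[j]? = u[(j + d) % p]? := by
      intro j hj
      conv_lhs => rw [← heq]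
      rw [List.getElem?_rotate (show j < u.length by rw [hul]; exact hj), hul]
    have hdper : IsPeriodOf v d := by
      refine ⟨hd0, by omega, ?_⟩
      intro k hk
      rw [hvmod k (by omega), hvmod (k + d) (by omega),
        ← hug _ (Nat.mod_lt _ hp0), ← hug _ (Nat.mod_lt _ hp0),
        hud (k % p) (Nat.mod_lt _ hp0), Nat.mod_add_mod]
    have := hleast d hdper
    omega
  -- rotations by distinct amounts < p are distinct
  have hrotinj : ∀ i j, i < p → j < p → u.rotate i = u.rotate j → i = j := by
    have key : ∀ i j, i < j → j < p → u.rotate i ≠ u.rotate j := by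
      intro i j hij hj heq
      have h2 : (u.rotate i).rotate (p - j) = (u.rotate j).rotate (p - j) := by rw [heq]
      rw [List.rotate_rotate, List.rotate_rotate] at h2
      have h3 : j + (p - j) = p := by omega
      have h4 : u.rotate p = u := by rw [← hul]; exact List.rotate_length u
      rw [h3, h4] at h2
      exact hprim (i + (p - j)) (by omega) (by omega) h2
    intro i j hi hj heq
    rcases lt_trichotomy i j with h | h | h
    · exact absurd heq (key i j h hj)
    · exact h
    · exact absurd heq.symm (key j i h hi)
  -- a minimal rotation exists
  have exmin : ∀ n : ℕ, ∃ m ≤ n, ∀ i ≤ n,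
      ¬ List.Lex (· < ·) (u.rotate i) (u.rotate m) := by
    intro n
    induction n with
    | zero =>
      refine ⟨0, le_refl 0, ?_⟩
      intro i hi
      have : i = 0 := by omega
      subst this
      exact irrefl_of (List.Lex (· < ·)) _
    | succ n ih =>
      obtain ⟨m, hm, hmin⟩ := ih
      rcases trichotomous_of (List.Lex (· < ·)) (u.rotate (n + 1)) (u.rotate m) with h | h | h
      · refine ⟨n + 1, le_refl _, ?_⟩
        intro i hi
        rcases Nat.lt_or_ge i (n + 1) with h2 | h2
        · intro hlex
          exact hmin i (by omega) (List.lex_trans (fun h1 h2 => lt_trans h1 h2) hlex h)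
        · have : i = n + 1 := by omega
          subst this
          exact irrefl_of (List.Lex (· < ·)) _
      · refine ⟨m, by omega, ?_⟩
        intro i hi
        rcases Nat.lt_or_ge i (n + 1) with h2 | h2
        · exact hmin i (by omega)
        · have : i = n + 1 := by omega
          subst this
          rw [h]
          exact irrefl_of (List.Lex (· < ·)) _
      · refine ⟨m, by omega, ?_⟩
        intro i hi
        rcases Nat.lt_or_ge i (n + 1) with h2 | h2
        · exact hmin i (by omega)
        · have : i = n + 1 := by omega
          subst this
          exact asymm_of (List.Lex (· < ·)) h
  obtain ⟨m, hmp, hmin0⟩ := exmin (p - 1)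
  have hmp' : m < p := by omega
  set w := u.rotate m with hw
  have hmin : ∀ i, i < p → ¬ List.Lex (· < ·) (u.rotate i) w := fun i hi =>
    hmin0 i (by omega)
  have hwl : w.length = p := by rw [hw, List.length_rotate, hul]
  have hwne : w ≠ [] := by
    intro h
    rw [h] at hwl
    simp at hwl
    omega
  have hwrot : ∀ k, w.rotate k = u.rotate ((m + k) % p) := by
    intro k
    rw [hw, List.rotate_rotate]
    rw [← hul]
    exact (List.rotate_mod u (m + k)).symm
  -- w is Lyndon
  have hlw : IsLyndon w := by
    refine ⟨hwne, ?_⟩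
    intro s hs hsne hsnw
    obtain ⟨t, ht⟩ := hs
    have htne : t ≠ [] := by
      intro h
      rw [h] at ht
      simp at ht
      exact hsnw ht
    have hlen : t.length + s.length = p := by
      have h := congrArg List.length ht
      rw [List.length_append, hwl] at h
      exact h
    have ht0 : 0 < t.length := List.length_pos_iff.2 htne
    have hs0 : 0 < s.length := List.length_pos_iff.2 hsne
    have hst : w.rotate t.length = s ++ t := by
      rw [List.rotate_eq_drop_append_take (by omega : t.length ≤ w.length), ← ht,
        List.drop_left, List.take_left]
    have hstu : s ++ t = u.rotate ((m + t.length) % p) := by rw [← hst, hwrot]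
    have hne2 : w ≠ s ++ t := by
      intro h
      have heq : u.rotate m = u.rotate ((m + t.length) % p) := by
        rw [← hw, h, hstu]
      have hmm := hrotinj m ((m + t.length) % p) hmp' (Nat.mod_lt _ hp0) heq
      rcases Nat.lt_or_ge (m + t.length) p with hc | hc
      · rw [Nat.mod_eq_of_lt hc] at hmm; omega
      · rw [Nat.mod_eq_sub_mod hc, Nat.mod_eq_of_lt (by omega)] at hmm; omega
    have hlt : List.Lex (· < ·) w (s ++ t) := by
      rcases trichotomous_of (List.Lex (· < ·)) w (s ++ t) with h | h | h
      · exact h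
      · exact absurd h hne2
      · exfalso
        rw [hstu] at h
        exact hmin _ (Nat.mod_lt _ hp0) h
    rcases LRootAux.lexA s w t hlt with h | h
    · exact h
    · obtain ⟨r, hr⟩ := h
      have hlen2 : s.length + r.length = p := by
        have h2 := congrArg List.length hr
        rw [List.length_append, hwl] at h2
        exact h2
      rw [← hr] at hlt
      have hrt : List.Lex (· < ·) r t := LRootAux.lexC s r t hlt
      have hrs : List.Lex (· < ·) (r ++ s) (t ++ s) :=
        LRootAux.lexB r t s hrt (by omega)
      rw [ht] at hrs
      have hrsu : r ++ s = u.rotate ((m + s.length) % p) := by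
        rw [← hwrot s.length,
          List.rotate_eq_drop_append_take (by omega : s.length ≤ w.length), ← hr,
          List.drop_left, List.take_left]
      rw [hrsu] at hrs
      exact absurd hrs (hmin _ (Nat.mod_lt _ hp0))
  -- w is a substring of v
  have hwin : w <:+: v := by
    have h := hW m (by omega)
    rw [Nat.mod_eq_of_lt hmp'] at h
    rw [hw, ← h]
    exact hWinf m
  -- every candidate is a rotation of u
  have hcand : ∀ lam : List α, lam.length = p → lam <:+: v → ∃ j < p, lam = u.rotate j := by
    intro lam hl hinf
    obtain ⟨s, t, hst⟩ := hinf
    refine ⟨s.length % p, Nat.mod_lt _ hp0, ?_⟩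
    have hlv : s.length + p ≤ v.length := by
      have h := congrArg List.length hst
      rw [List.length_append, List.length_append, hl] at h
      omega
    have h := hW s.length hlv
    have h2 : v.drop s.length = lam ++ t := by
      rw [← hst, List.append_assoc, List.drop_left]
    rw [← h, h2, ← hl, List.take_left]
  -- a Lyndon rotation is Lex-below every other rotation
  have hkey : ∀ a b : List α, ∀ i j, i < p → j < p → a = u.rotate i → b = u.rotate j →
      IsLyndon a → a ≠ b → List.Lex (· < ·) a b := by
    intro a b i j hi hj ha hb hla hab
    have hij : i ≠ j := by
      intro h
      exact hab (by rw [ha, hb, h])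
    set k := (j + p - i) % p with hkdef
    have hkp : k < p := Nat.mod_lt _ hp0
    have hk0 : 0 < k := by
      rw [hkdef]
      rcases lt_or_ge i j with h | h
      · have e : j + p - i = p + (j - i) := by omega
        rw [e, Nat.add_mod_left, Nat.mod_eq_of_lt (by omega)]
        omega
      · have hji : j < i := by omega
        have e : j + p - i = p - (i - j) := by omega
        rw [e, Nat.mod_eq_of_lt (by omega)]
        omega
    have h1 : (i + k) % p = j := by
      rw [hkdef, Nat.add_mod_mod]
      have e2 : i + (j + p - i) = j + p := by omega
      rw [e2, Nat.add_mod_right, Nat.mod_eq_of_lt hj]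
    have hbrot : b = a.rotate k := by
      rw [hb, ha, List.rotate_rotate, ← h1]
      rw [← hul]
      exact List.rotate_mod u (i + k)
    have hal : a.length = p := by rw [ha, List.length_rotate, hul]
    have hsplit : a.rotate k = a.drop k ++ a.take k :=
      List.rotate_eq_drop_append_take (by omega)
    have hsl : (a.drop k).length = p - k := by rw [List.length_drop, hal]
    have hlex1 : List.Lex (· < ·) a (a.drop k) := by
      apply hla.2 _ (List.drop_suffix k a)
      · apply List.length_pos_iff.1
        rw [hsl]
        omega
      · intro h
        have h2 := congrArg List.length h
        rw [hsl, hal] at h2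
        omega
    have h3 := List.Lex.append_right (· < ·) (a.take k) hlex1
    rw [← hsplit, ← hbrot] at h3
    exact h3
  refine ⟨w, ⟨hwl, hlw, hwin⟩, ?_⟩
  intro lam hlam
  obtain ⟨hl1, hl2, hl3⟩ := hlam
  obtain ⟨j, hj, hju⟩ := hcand lam hl1 hl3
  by_contra hne
  have h1 := hkey lam w j m hj hmp' hju hw hl2 hne
  have h2 := hkey w lam m j hmp' hj hw hju hlw (Ne.symm hne)
  exact asymm_of (List.Lex (· < ·)) h1 h2
end

section
/- Let w, z, λ be Lyndon words with w = zλ (so that this is the standard factorization of w into left factor z and right factor λ). If |z| ≤ |λ|, then z is not a suffix of λ. -/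
lemma lex_append_of_ne_nil {α : Type*} [LinearOrder α] (l t : List α) (ht : t ≠ []) :
    List.Lex (· < ·) l (l ++ t) := by
  induction l with
  | nil =>
    cases t with
    | nil => exact absurd rfl ht
    | cons a t' => exact List.Lex.nil
  | cons a l ih => exact List.Lex.cons ih

/-- Let `w = z · λ` where `w`, `z`, `λ` are all Lyndon words (standard factorization).
If `|z| ≤ |λ|`, then `z` is not a suffix of `λ`. -/
theorem left_factor_not_suffix {α : Type*} [LinearOrder α]
    (z lam : List α) (hz : IsLyndon z) (hlam : IsLyndon lam)
    (hw : IsLyndon (z ++ lam)) (hlen : z.length ≤ lam.length) :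
    ¬ z <:+ lam := by
  intro hsuf
  have hzw : z <:+ z ++ lam := hsuf.trans (List.suffix_append z lam)
  have hne : z ≠ z ++ lam := by
    intro h
    have := congrArg List.length h
    simp at this
    exact hlam.1 this
  have h1 : List.Lex (· < ·) (z ++ lam) z := hw.2 z hzw hz.1 hne
  have h2 : List.Lex (· < ·) z (z ++ lam) := lex_append_of_ne_nil z lam hlam.1
  exact Std.Asymm.asymm _ _ h1 h2
end
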